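/- Let d ≥ 1, let C be a finite set of classes, let λ > 0, and let ν be the uniform probability measure on the cube [−λ, λ]^d (normalized Lebesgue measure restricted to the cube). Let f : ℝ^d → C be a measurable classifier, let x ∈ ℝ^d, let c_A ∈ C, and let p_A ∈ (1/2, 1] be such that ℙ_{ε∼ν}(f(x+ε) = c_A) ≥ p_A and ℙ_{ε∼ν}(f(x+ε) = c) ≤ 1 − p_A for every class c ≠ c_A. Then for every δ ∈ ℝ^d with ‖δ‖_1 < 2λ(p_A − 1/2) and every class c ≠ c_A, ℙ_{ε∼ν}(f(x+δ+ε) = c_A) > ℙ_{ε∼ν}(f(x+δ+ε) = c). -/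

import Mathlib

open MeasureTheory Set

open Finset in
private lemma bern_aux {ι : Type*} (s : Finset ι) (a : ι → ℝ)
    (h0 : ∀ i ∈ s, 0 ≤ a i) (h1 : ∀ i ∈ s, a i ≤ 1) :
    1 - ∑ i ∈ s, a i ≤ ∏ i ∈ s, (1 - a i) := by
  classical
  induction s using Finset.induction with
  | empty => simp
  | @insert j s hj ih =>
    rw [Finset.sum_insert hj, Finset.prod_insert hj]
    have h0j := h0 j (Finset.mem_insert_self j s)
    have h1j := h1 j (Finset.mem_insert_self j s)
    have hws : ∀ i ∈ s, 0 ≤ a i := fun i hi => h0 i (Finset.mem_insert_of_mem hi)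
    have ih' := ih hws (fun i hi => h1 i (Finset.mem_insert_of_mem hi))
    have hs0 : (0:ℝ) ≤ ∑ i ∈ s, a i := Finset.sum_nonneg hws
    nlinarith [ih']

theorem uniform_isotropic_certified_robustness_l1
    {d : ℕ} (hd : 1 ≤ d)
    {C : Type} [Fintype C] [MeasurableSpace C] [MeasurableSingletonClass C]
    (lam : ℝ) (hlam : 0 < lam)
    (ν : Measure (Fin d → ℝ))
    (hν : ν = (volume (Set.univ.pi fun _ : Fin d => Set.Icc (-lam) lam))⁻¹ •
      volume.restrict (Set.univ.pi fun _ : Fin d => Set.Icc (-lam) lam))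
    (f : (Fin d → ℝ) → C) (hf : Measurable f)
    (x : Fin d → ℝ) (cA : C) (pA : ℝ) (hpA : 1 / 2 < pA) (hpA' : pA ≤ 1)
    (hA : pA ≤ (ν {ε | f (x + ε) = cA}).toReal)
    (hB : ∀ c : C, c ≠ cA → (ν {ε | f (x + ε) = c}).toReal ≤ 1 - pA) :
    ∀ δ : Fin d → ℝ, (∑ i, |δ i|) < 2 * lam * (pA - 1 / 2) →
      ∀ c : C, c ≠ cA →
        (ν {ε | f (x + δ + ε) = c}).toReal <
          (ν {ε | f (x + δ + ε) = cA}).toReal := by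
  intro δ hδ c hc
  set Q : Set (Fin d → ℝ) := Set.univ.pi fun _ : Fin d => Set.Icc (-lam) lam with hQ
  set Qδ : Set (Fin d → ℝ) := Set.univ.pi fun i : Fin d => Set.Icc (δ i - lam) (δ i + lam) with hQδ
  have hQm : MeasurableSet Q := MeasurableSet.univ_pi fun i => measurableSet_Icc
  have hQδm : MeasurableSet Qδ := MeasurableSet.univ_pi fun i => measurableSet_Icc
  -- volumes
  have hvolQ : volume Q = ∏ _i : Fin d, ENNReal.ofReal (2 * lam) := by
    rw [hQ, volume_pi_pi]
    congr 1; funext i; rw [Real.volume_Icc]; ring_nf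
  have hvolQδ : volume Qδ = ∏ _i : Fin d, ENNReal.ofReal (2 * lam) := by
    rw [hQδ, volume_pi_pi]
    congr 1; funext i; rw [Real.volume_Icc]; ring_nf
  have hvolQ_ne_top : volume Q ≠ ⊤ := by
    rw [hvolQ]; exact (ENNReal.prod_lt_top fun i _ => ENNReal.ofReal_lt_top).ne
  have hvolQδ_ne_top : volume Qδ ≠ ⊤ := by
    rw [hvolQδ]; exact (ENNReal.prod_lt_top fun i _ => ENNReal.ofReal_lt_top).ne
  have hvolQ_pos : 0 < volume Q := by
    rw [hvolQ]
    rw [CanonicallyOrderedAdd.prod_pos]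
    intro i _
    rw [ENNReal.ofReal_pos]; linarith
  set VQ : ℝ := (volume Q).toReal with hVQ
  have hVQval : VQ = (2 * lam) ^ d := by
    rw [hVQ, hvolQ, ENNReal.toReal_prod]
    simp [ENNReal.toReal_ofReal (by linarith : (0:ℝ) ≤ 2 * lam), ENNReal.toReal_ofReal hlam.le]
  have hVQpos : 0 < VQ := by
    rw [hVQval]; positivity
  -- every coordinate of δ is small
  have hcoord : ∀ i : Fin d, |δ i| ≤ lam := by
    intro i
    have h1 : |δ i| ≤ ∑ j, |δ j| :=
      Finset.single_le_sum (f := fun j => |δ j|) (fun j _ => abs_nonneg _) (Finset.mem_univ i)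
    nlinarith
  -- intersection volume
  have hinter : Q ∩ Qδ = Set.univ.pi fun i : Fin d =>
      Set.Icc (max (-lam) (δ i - lam)) (min lam (δ i + lam)) := by
    rw [hQ, hQδ, ← Set.pi_inter_distrib]
    exact Set.pi_congr rfl fun i _ => Set.Icc_inter_Icc
  have hlen : ∀ i : Fin d, min lam (δ i + lam) - max (-lam) (δ i - lam) = 2 * lam - |δ i| := by
    intro i
    rcases abs_cases (δ i) with ⟨h1, h2⟩ | ⟨h1, h2⟩ <;>
      · rw [h1]
        rw [min_def, max_def]
        split_ifs <;> linarith
  set r : ℝ := ∏ i : Fin d, (2 * lam - |δ i|) with hr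
  have hrpos : ∀ i : Fin d, 0 ≤ 2 * lam - |δ i| := by
    intro i; have := hcoord i; linarith
  have hvolinter : (volume (Q ∩ Qδ)).toReal = r := by
    rw [hinter, volume_pi_pi, ENNReal.toReal_prod, hr]
    congr 1; funext i
    rw [Real.volume_Icc, ENNReal.toReal_ofReal (by rw [hlen i]; exact hrpos i), hlen i]
  clear_value VQ r
  -- ν of a measurable set
  have hνS : ∀ S : Set (Fin d → ℝ), MeasurableSet S →
      (ν S).toReal = (volume (S ∩ Q)).toReal / VQ := by
    intro S hS
    rw [hν, Measure.smul_apply, Measure.restrict_apply hS, smul_eq_mul,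
      ENNReal.toReal_mul, ENNReal.toReal_inv, ← hVQ]
    rw [div_eq_mul_inv, mul_comm]
  -- ν of a shifted measurable set
  have hνshift : ∀ S : Set (Fin d → ℝ), MeasurableSet S →
      (ν ((fun ε => δ + ε) ⁻¹' S)).toReal = (volume (S ∩ Qδ)).toReal / VQ := by
    intro S hS
    have hpre : ((fun ε => δ + ε) ⁻¹' S) ∩ Q = (fun ε => δ + ε) ⁻¹' (S ∩ Qδ) := by
      ext ε
      simp only [Set.mem_inter_iff, Set.mem_preimage, hQ, hQδ, Set.mem_pi, Set.mem_univ,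
        forall_true_left, Set.mem_Icc, Pi.add_apply]
      constructor
      · rintro ⟨h1, h2⟩
        exact ⟨h1, fun i => ⟨by linarith [(h2 i).1], by linarith [(h2 i).2]⟩⟩
      · rintro ⟨h1, h2⟩
        exact ⟨h1, fun i => ⟨by linarith [(h2 i).1], by linarith [(h2 i).2]⟩⟩
    rw [hνS _ (hS.preimage (measurable_const_add δ)), hpre,
      measure_preimage_add volume δ (S ∩ Qδ)]
  -- key TV bound, real version
  have hfin : ∀ T : Set (Fin d → ℝ), T ⊆ Q ∪ Qδ → volume T ≠ ⊤ := by
    intro T hT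
    exact ((measure_mono hT).trans_lt ((measure_union_le _ _).trans_lt
      (by rw [ENNReal.add_lt_top]; exact ⟨hvolQ_ne_top.lt_top, hvolQδ_ne_top.lt_top⟩))).ne
  have hTV : ∀ S : Set (Fin d → ℝ), MeasurableSet S →
      |(volume (S ∩ Qδ)).toReal - (volume (S ∩ Q)).toReal| ≤ VQ - r := by
    intro S hS
    have hdiff1 : (volume (Qδ \ Q)).toReal = VQ - r := by
      have := measure_diff_add_inter Qδ hQm (μ := volume)
      have h2 : (volume (Qδ \ Q)).toReal + (volume (Qδ ∩ Q)).toReal = VQ := by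
        rw [← ENNReal.toReal_add (hfin _ (fun y hy => Or.inr hy.1))
          (hfin _ (fun y hy => Or.inr hy.1)), this, hvolQδ, hVQ, hvolQ]
      rw [Set.inter_comm] at h2
      rw [hvolinter] at h2; linarith
    have hdiff2 : (volume (Q \ Qδ)).toReal = VQ - r := by
      have := measure_diff_add_inter Q hQδm (μ := volume)
      have h2 : (volume (Q \ Qδ)).toReal + (volume (Q ∩ Qδ)).toReal = VQ := by
        rw [← ENNReal.toReal_add (hfin _ (fun y hy => Or.inl hy.1))
          (hfin _ (fun y hy => Or.inl hy.1)), this, ← hVQ]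
      rw [hvolinter] at h2; linarith
    have key : ∀ A B : Set (Fin d → ℝ), A ⊆ Q ∪ Qδ → B ⊆ Q ∪ Qδ →
        (volume (S ∩ A)).toReal ≤ (volume (S ∩ B)).toReal + (volume (A \ B)).toReal := by
      intro A B hAs hBs
      have hsub : S ∩ A ⊆ (S ∩ B) ∪ (A \ B) := by
        rintro y ⟨hyS, hyA⟩
        by_cases hyB : y ∈ B
        · exact Or.inl ⟨hyS, hyB⟩
        · exact Or.inr ⟨hyA, hyB⟩
      have h1 : volume (S ∩ A) ≤ volume (S ∩ B) + volume (A \ B) :=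
        (measure_mono hsub).trans (measure_union_le _ _)
      have hfB : volume (S ∩ B) ≠ ⊤ := hfin _ fun y hy => hBs hy.2
      have hfA : volume (A \ B) ≠ ⊤ := hfin _ fun y hy => hAs hy.1
      calc (volume (S ∩ A)).toReal
          ≤ (volume (S ∩ B) + volume (A \ B)).toReal :=
            ENNReal.toReal_mono (by rw [ENNReal.add_ne_top]; exact ⟨hfB, hfA⟩) h1
        _ = (volume (S ∩ B)).toReal + (volume (A \ B)).toReal := ENNReal.toReal_add hfB hfA
    rw [abs_sub_le_iff]
    constructor
    · have := key Qδ Q (fun y hy => Or.inr hy) (fun y hy => Or.inl hy)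
      linarith [hdiff1]
    · have := key Q Qδ (fun y hy => Or.inl hy) (fun y hy => Or.inr hy)
      linarith [hdiff2]
  -- the sets of interest
  set SA : Set (Fin d → ℝ) := {ε | f (x + ε) = cA} with hSA
  set Sc : Set (Fin d → ℝ) := {ε | f (x + ε) = c} with hSc
  have hSAm : MeasurableSet SA :=
    (hf.comp (measurable_const_add x)) (measurableSet_singleton cA)
  have hScm : MeasurableSet Sc :=
    (hf.comp (measurable_const_add x)) (measurableSet_singleton c)
  have hEA : {ε | f (x + δ + ε) = cA} = (fun ε => δ + ε) ⁻¹' SA := by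
    ext ε; simp [hSA, add_assoc]
  have hEc : {ε | f (x + δ + ε) = c} = (fun ε => δ + ε) ⁻¹' Sc := by
    ext ε; simp [hSc, add_assoc]
  -- bound on t := VQ - r
  have hrdiv : r / VQ = ∏ i : Fin d, (1 - |δ i| / (2 * lam)) := by
    rw [hr, hVQval,
      show ((2 * lam) ^ d : ℝ) = ∏ _i : Fin d, (2 * lam) by
        rw [Finset.prod_const, Finset.card_univ, Fintype.card_fin],
      ← Finset.prod_div_distrib]
    refine Finset.prod_congr rfl fun i _ => ?_
    rw [sub_div, div_self (by linarith : (2:ℝ) * lam ≠ 0)]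
  have hsum : (∑ i : Fin d, |δ i| / (2 * lam)) < pA - 1 / 2 := by
    rw [← Finset.sum_div]
    rw [div_lt_iff₀ (by linarith : (0:ℝ) < 2 * lam)]
    calc (∑ i, |δ i|) < 2 * lam * (pA - 1 / 2) := hδ
      _ = (pA - 1 / 2) * (2 * lam) := by ring
  have hberk : 1 - (∑ i : Fin d, |δ i| / (2 * lam)) ≤ r / VQ := by
    rw [hrdiv]
    exact bern_aux Finset.univ _ (fun i _ => by positivity)
      (fun i _ => by
        have := hcoord i
        rw [div_le_one (by linarith : (0:ℝ) < 2 * lam)]; linarith)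
  have ht : VQ - r < VQ * (pA - 1 / 2) := by
    have h1 : 1 - (pA - 1 / 2) < r / VQ := by linarith
    rw [lt_div_iff₀ hVQpos] at h1
    have hring : VQ - (1 - (pA - 1 / 2)) * VQ = VQ * (pA - 1 / 2) := by ring
    linarith
  -- put everything together
  have hTVA := hTV SA hSAm
  have hTVc := hTV Sc hScm
  have hbA : pA ≤ (volume (SA ∩ Q)).toReal / VQ := by rw [← hνS SA hSAm]; exact hA
  have hbc : (volume (Sc ∩ Q)).toReal / VQ ≤ 1 - pA := by
    rw [← hνS Sc hScm]; exact hB c hc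
  rw [hEA, hEc, hνshift SA hSAm, hνshift Sc hScm]
  rw [abs_sub_le_iff] at hTVA hTVc
  have hbA' : pA * VQ ≤ (volume (SA ∩ Q)).toReal := by
    rw [le_div_iff₀ hVQpos] at hbA; linarith
  have hbc' : (volume (Sc ∩ Q)).toReal ≤ VQ - pA * VQ := by
    rw [div_le_iff₀ hVQpos] at hbc
    have hring : (1 - pA) * VQ = VQ - pA * VQ := by ring
    linarith
  have ht' : VQ - r < pA * VQ - VQ * (1 / 2) := by
    have hring : VQ * (pA - 1 / 2) = pA * VQ - VQ * (1 / 2) := by ring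
    linarith
  have hfinal : (volume (Sc ∩ Qδ)).toReal < (volume (SA ∩ Qδ)).toReal := by
    linarith [hTVA.1, hTVA.2, hTVc.1, hTVc.2]
  gcongr
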